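/- Fix an integer k ≥ 2 and nonzero real numbers w₁, …, w_k. Then: (i) there is a constant C > 0 such that for every n and every set E of n points in ℝ², the number of (k+1)-tuples (x₀, x₁, …, x_k) of pairwise distinct points of E with x₀ · x_i = w_i for all i = 1, …, k is at most C · n^k; and (ii) there exist a constant c > 0 and N such that for every n > N there is a set E of n points in ℝ² containing at least c · n^k such tuples. In other words, for the k-star G with edge weights w₁, …, w_k, g(G; n) ≈ n^k. -/

import Mathlib

open scoped InnerProductSpace

noncomputable section

/-- Points in the plane. -/
abbrev Pt2 : Type := EuclideanSpace ℝ (Fin 2)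

/-- The set of dot product `k`-star configurations with weights `w` in a point set `E`:
`(k+1)`-tuples `(x 0, x 1, …, x k)` of pairwise distinct points of `E` such that the dot
product of the center `x 0` with the `i`-th leaf `x (i+1)` equals `w i`. -/
def dpStarConfigs (k : ℕ) (w : Fin k → ℝ) (E : Finset Pt2) : Set (Fin (k + 1) → Pt2) :=
  {x | (∀ i, x i ∈ E) ∧ Function.Injective x ∧ ∀ i : Fin k, ⟪x 0, x i.succ⟫_ℝ = w i}

lemma DPAux.inner_coords (x y : Pt2) : ⟪x, y⟫_ℝ = x 0 * y 0 + x 1 * y 1 := by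
  simp [PiLp.inner_apply, Fin.sum_univ_two, RCLike.inner_apply, mul_comm]

def DPAux.pt (a b : ℝ) : Pt2 := (WithLp.equiv 2 (Fin 2 → ℝ)).symm ![a, b]

@[simp] lemma DPAux.pt0 (a b : ℝ) : DPAux.pt a b 0 = a := rfl
@[simp] lemma DPAux.pt1 (a b : ℝ) : DPAux.pt a b 1 = b := rfl

lemma DPAux.blockinj {m i i' j j' : ℕ} (hm : 0 < m) (hj : j < m) (hj' : j' < m)
    (h : i*m+j = i'*m+j') : i = i' ∧ j = j' := by
  have h1 : (i*m+j) / m = i := by rw [mul_comm, Nat.mul_add_div hm, Nat.div_eq_of_lt hj, add_zero]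
  have h2 : (i'*m+j') / m = i' := by rw [mul_comm, Nat.mul_add_div hm, Nat.div_eq_of_lt hj', add_zero]
  rw [h] at h1
  have hii : i = i' := h1.symm.trans h2
  subst hii
  exact ⟨rfl, by omega⟩

lemma DPAux.upper (k : ℕ) (hk : 2 ≤ k) (w : Fin k → ℝ) (hw : ∀ i, w i ≠ 0)
    (n : ℕ) (E : Finset Pt2) (hE : E.card = n) :
    (dpStarConfigs k w E).ncard ≤ 2 * n ^ k := by
  classical
  set ia : Fin k := ⟨0, by omega⟩ with hia
  set ib : Fin k := ⟨1, by omega⟩ with hib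
  have hab : ia ≠ ib := by simp [hia, hib, Fin.ext_iff]
  set S := dpStarConfigs k w E with hS
  set T : Finset (Fin k → Pt2) := Fintype.piFinset (fun _ => E) with hT
  have hTcard : T.card = n ^ k := by
    simp [hT, Fintype.card_piFinset, hE]
  set det : (Fin (k+1) → Pt2) → ℝ :=
    fun x => x ia.succ 0 * x ib.succ 1 - x ia.succ 1 * x ib.succ 0 with hdet
  set S1 := {x ∈ S | det x ≠ 0} with hS1
  set S2 := {x ∈ S | det x = 0} with hS2
  have key1 : S1.ncard ≤ n ^ k := by
    rw [← hTcard, ← Set.ncard_coe_finset]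
    refine Set.ncard_le_ncard_of_injOn (fun x => fun i : Fin k => x i.succ) ?_ ?_ T.finite_toSet
    · intro x hx
      simp only [Finset.mem_coe, hT, Fintype.mem_piFinset]
      exact fun i => hx.1.1 i.succ
    · rintro x ⟨⟨hxE, hxinj, hxw⟩, hxd⟩ y ⟨⟨hyE, hyinj, hyw⟩, hyd⟩ hxy
      have hleaf : ∀ i : Fin k, x i.succ = y i.succ := fun i => congrFun hxy i
      have e1x := hxw ia; have e2x := hxw ib
      have e1y := hyw ia; have e2y := hyw ib
      rw [DPAux.inner_coords, hleaf ia] at e1x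
      rw [DPAux.inner_coords, hleaf ib] at e2x
      rw [DPAux.inner_coords] at e1y e2y
      have hd : y ia.succ 0 * y ib.succ 1 - y ia.succ 1 * y ib.succ 0 ≠ 0 := by
        simpa only [hdet, hleaf ia, hleaf ib] using hxd
      have hu : (y ia.succ 0 * y ib.succ 1 - y ia.succ 1 * y ib.succ 0) * (x 0 0 - y 0 0) = 0 := by
        linear_combination y ib.succ 1 * e1x - y ib.succ 1 * e1y - y ia.succ 1 * e2x + y ia.succ 1 * e2y
      have hv : (y ia.succ 0 * y ib.succ 1 - y ia.succ 1 * y ib.succ 0) * (x 0 1 - y 0 1) = 0 := by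
        linear_combination y ia.succ 0 * e2x - y ia.succ 0 * e2y - y ib.succ 0 * e1x + y ib.succ 0 * e1y
      have hu0 : x 0 0 = y 0 0 := by
        have := (mul_eq_zero.mp hu).resolve_left hd; linarith
      have hv0 : x 0 1 = y 0 1 := by
        have := (mul_eq_zero.mp hv).resolve_left hd; linarith
      funext j
      refine Fin.cases ?_ (fun i => hleaf i) j
      ext c; fin_cases c <;> assumption
  have key2 : S2.ncard ≤ n ^ k := by
    rw [← hTcard, ← Set.ncard_coe_finset]
    refine Set.ncard_le_ncard_of_injOn
      (fun x => fun i : Fin k => if i = ib then x 0 else x i.succ) ?_ ?_ T.finite_toSet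
    · intro x hx
      simp only [Finset.mem_coe, hT, Fintype.mem_piFinset]
      intro i
      by_cases h : i = ib <;> simp [h, hx.1.1]
    · rintro x ⟨⟨hxE, hxinj, hxw⟩, hxd⟩ y ⟨⟨hyE, hyinj, hyw⟩, hyd⟩ hxy
      have h0 : x 0 = y 0 := by simpa using congrFun hxy ib
      have hleaf : ∀ i : Fin k, i ≠ ib → x i.succ = y i.succ := by
        intro i hi
        simpa [hi] using congrFun hxy i
      have hA := hleaf ia hab
      have e1x := hxw ia; have e2x := hxw ib
      have e1y := hyw ia; have e2y := hyw ib
      rw [DPAux.inner_coords, hA, h0] at e1x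
      rw [DPAux.inner_coords, h0] at e2x
      rw [DPAux.inner_coords] at e1y e2y
      rw [hdet] at hxd hyd
      simp only [hA, h0] at hxd
      have hyd' : y ia.succ 0 * y ib.succ 1 - y ia.succ 1 * y ib.succ 0 = 0 := hyd
      have hc0 : x ib.succ 0 * w ia = y ia.succ 0 * w ib := by
        linear_combination y ia.succ 0 * e2x - x ib.succ 0 * e1y - y 0 1 * hxd
      have hc1 : x ib.succ 1 * w ia = y ia.succ 1 * w ib := by
        linear_combination y ia.succ 1 * e2x - x ib.succ 1 * e1y + y 0 0 * hxd
      have hd0 : y ib.succ 0 * w ia = y ia.succ 0 * w ib := by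
        linear_combination y ia.succ 0 * e2y - y ib.succ 0 * e1y - y 0 1 * hyd'
      have hd1 : y ib.succ 1 * w ia = y ia.succ 1 * w ib := by
        linear_combination y ia.succ 1 * e2y - y ib.succ 1 * e1y + y 0 0 * hyd'
      have hB : x ib.succ = y ib.succ := by
        ext c
        fin_cases c
        · exact mul_right_cancel₀ (hw ia) (hc0.trans hd0.symm)
        · exact mul_right_cancel₀ (hw ia) (hc1.trans hd1.symm)
      funext j
      refine Fin.cases h0 (fun i => ?_) j
      by_cases hi : i = ib
      · rw [hi]; exact hB
      · exact hleaf i hi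
  have hcup : S ⊆ S1 ∪ S2 := by
    intro x hx
    by_cases h : det x = 0
    · exact Or.inr ⟨hx, h⟩
    · exact Or.inl ⟨hx, h⟩
  calc S.ncard ≤ (S1 ∪ S2).ncard := by
        refine Set.ncard_le_ncard hcup ?_
        refine Set.Finite.union ?_ ?_ <;>
        · refine Set.Finite.subset (Fintype.piFinset (fun _ : Fin (k+1) => E)).finite_toSet ?_
          rintro x ⟨hx, -⟩
          simp only [Finset.mem_coe, Fintype.mem_piFinset]
          exact hx.1
    _ ≤ S1.ncard + S2.ncard := Set.ncard_union_le _ _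
    _ ≤ 2 * n ^ k := by omega
lemma DPAux.lower (k : ℕ) (hk : 2 ≤ k) (w : Fin k → ℝ) (hw : ∀ i, w i ≠ 0)
    (n : ℕ) (hn : 2*k < n) :
    ∃ E : Finset Pt2, E.card = n ∧
      ((1/(2*(k:ℝ)))^k) * (n:ℝ) ^ k ≤ ((dpStarConfigs k w E).ncard : ℝ) := by
  classical
  set m : ℕ := (n-1)/k with hmdef
  have hk0 : 0 < k := by omega
  have hm : 0 < m := by
    rw [hmdef]
    exact Nat.one_le_div_iff hk0 |>.mpr (by omega)
  -- the key numeric fact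
  have hn2km : n ≤ 2*(k*m) := by
    have hdm := Nat.div_add_mod (n-1) k
    have hs : (n-1) % k < k := Nat.mod_lt _ hk0
    rw [← hmdef] at hdm
    set K := k*m with hK
    set s := (n-1) % k with hsdef
    omega
  have hkm : k*m ≤ n - 1 := by
    have := Nat.div_mul_le_self (n-1) k
    rw [hmdef, mul_comm]; exact Nat.div_mul_le_self (n-1) k
  set r : ℕ := n - 1 - k*m with hrdef
  set center : Pt2 := DPAux.pt 1 0 with hcenter
  set leaf : Fin k → Fin m → Pt2 :=
    fun i j => DPAux.pt (w i) (((i:ℕ)*m + (j:ℕ) + 1 : ℕ) : ℝ) with hleaf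
  set padp : ℕ → Pt2 := fun t => DPAux.pt 0 ((t + 1 : ℕ) : ℝ) with hpad
  have ptinj : ∀ {a b c d : ℝ}, DPAux.pt a b = DPAux.pt c d → a = c ∧ b = d := by
    intro a b c d h
    exact ⟨by simpa using congrArg (fun p : Pt2 => p 0) h, by simpa using congrArg (fun p : Pt2 => p 1) h⟩
  have leafinj : Function.Injective (fun p : Fin k × Fin m => leaf p.1 p.2) := by
    rintro ⟨i, j⟩ ⟨i', j'⟩ h
    have h2 := (ptinj h).2
    have h3 : (i:ℕ)*m + (j:ℕ) + 1 = (i':ℕ)*m + (j':ℕ) + 1 := by exact_mod_cast h2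
    obtain ⟨hi, hj⟩ := DPAux.blockinj hm j.isLt j'.isLt (Nat.succ_injective h3)
    simp only [Prod.mk.injEq]
    exact ⟨Fin.ext hi, Fin.ext hj⟩
  set leafS : Finset Pt2 := Finset.image (fun p : Fin k × Fin m => leaf p.1 p.2) Finset.univ
    with hleafS
  set padS : Finset Pt2 := Finset.image padp (Finset.range r) with hpadS
  set E : Finset Pt2 := insert center (leafS ∪ padS) with hE
  have hleafcard : leafS.card = k*m := by
    rw [hleafS, Finset.card_image_of_injective _ leafinj]
    simp
  have hpadcard : padS.card = r := by
    rw [hpadS, Finset.card_image_of_injOn]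
    · exact Finset.card_range r
    · intro a _ b _ h
      have h2 := (ptinj h).2
      have h3 : a + 1 = b + 1 := by exact_mod_cast h2
      omega
  have hdisj : Disjoint leafS padS := by
    rw [Finset.disjoint_left]
    rintro p hp hq
    rw [hleafS, Finset.mem_image] at hp
    rw [hpadS, Finset.mem_image] at hq
    obtain ⟨⟨i, j⟩, -, rfl⟩ := hp
    obtain ⟨t, -, ht⟩ := hq
    exact hw i (ptinj ht.symm).1
  have hcnotin : center ∉ leafS ∪ padS := by
    intro h
    rw [Finset.mem_union] at h
    rcases h with h | h
    · rw [hleafS, Finset.mem_image] at h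
      obtain ⟨⟨i, j⟩, -, ht⟩ := h
      have := (ptinj ht).2
      have : ((i:ℕ)*m + (j:ℕ) + 1 : ℕ) = (0:ℝ) := this
      exact_mod_cast Nat.cast_ne_zero.mpr (by omega) this
    · rw [hpadS, Finset.mem_image] at h
      obtain ⟨t, -, ht⟩ := h
      have : ((t + 1 : ℕ) : ℝ) = (0:ℝ) := (ptinj ht).2
      exact_mod_cast Nat.cast_ne_zero.mpr (by omega) this
  have hEcard : E.card = n := by
    rw [hE, Finset.card_insert_of_notMem hcnotin, Finset.card_union_of_disjoint hdisj,
      hleafcard, hpadcard, hrdef]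
    omega
  -- the configurations
  set Φ : (Fin k → Fin m) → (Fin (k+1) → Pt2) :=
    fun j => Fin.cons center (fun i => leaf i (j i)) with hΦ
  have hsub : Set.range Φ ⊆ dpStarConfigs k w E := by
    rintro x ⟨j, rfl⟩
    refine ⟨?_, ?_, ?_⟩
    · intro i
      refine Fin.cases ?_ (fun i' => ?_) i
      · rw [hΦ]; simp only [Fin.cons_zero]
        exact Finset.mem_insert_self _ _
      · rw [hΦ]; simp only [Fin.cons_succ]
        refine Finset.mem_insert_of_mem (Finset.mem_union_left _ ?_)
        rw [hleafS, Finset.mem_image]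
        exact ⟨(i', j i'), Finset.mem_univ _, rfl⟩
    · intro a b hab
      have hcl : ∀ (i : Fin k) (jj : Fin m), center ≠ leaf i jj := by
        intro i jj h
        have : (0:ℝ) = ((i:ℕ)*m + (jj:ℕ) + 1 : ℕ) := (ptinj h).2
        exact Nat.cast_ne_zero.mpr (by omega) this.symm
      rcases Fin.eq_zero_or_eq_succ a with rfl | ⟨a', rfl⟩ <;>
        rcases Fin.eq_zero_or_eq_succ b with rfl | ⟨b', rfl⟩
      · rfl
      · exfalso
        rw [hΦ] at hab; simp only [Fin.cons_zero, Fin.cons_succ] at hab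
        exact hcl _ _ hab
      · exfalso
        rw [hΦ] at hab; simp only [Fin.cons_zero, Fin.cons_succ] at hab
        exact hcl _ _ hab.symm
      · rw [hΦ] at hab; simp only [Fin.cons_succ] at hab
        have h2 := (ptinj hab).2
        have h3 : (a':ℕ)*m + (j a':ℕ) + 1 = (b':ℕ)*m + (j b':ℕ) + 1 := by exact_mod_cast h2
        have := (DPAux.blockinj hm (j a').isLt (j b').isLt (Nat.succ_injective h3)).1
        exact congrArg Fin.succ (Fin.ext this)
    · intro i
      rw [hΦ]
      simp only [Fin.cons_zero, Fin.cons_succ]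
      rw [DPAux.inner_coords, hcenter, hleaf]
      simp
  have hΦinj : Function.Injective Φ := by
    intro j j' h
    funext i
    have := congrFun h i.succ
    rw [hΦ] at this; simp only [Fin.cons_succ] at this
    have h2 := (ptinj this).2
    have h3 : (i:ℕ)*m + (j i:ℕ) + 1 = (i:ℕ)*m + (j' i:ℕ) + 1 := by exact_mod_cast h2
    exact Fin.ext (by omega)
  have hfin : (dpStarConfigs k w E).Finite := by
    refine Set.Finite.subset (Fintype.piFinset (fun _ : Fin (k+1) => E)).finite_toSet ?_
    intro x hx
    simp only [Finset.mem_coe, Fintype.mem_piFinset]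
    exact hx.1
  have hcount : m ^ k ≤ (dpStarConfigs k w E).ncard := by
    have h1 : (Set.range Φ).ncard = m ^ k := by
      rw [← Set.image_univ, Set.ncard_image_of_injective _ hΦinj, Set.ncard_univ,
        Nat.card_eq_fintype_card]
      simp
    rw [← h1]
    exact Set.ncard_le_ncard hsub hfin
  refine ⟨E, hEcard, ?_⟩
  have hnm : (n:ℝ) ≤ 2*(k:ℝ)*(m:ℝ) := by exact_mod_cast (mul_assoc 2 k m) ▸ hn2km
  have hk0' : (0:ℝ) < 2*(k:ℝ) := by positivity
  have hdiv : (n:ℝ)/(2*(k:ℝ)) ≤ (m:ℝ) := by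
    rw [div_le_iff₀ hk0']; linarith
  calc ((1/(2*(k:ℝ)))^k) * (n:ℝ) ^ k = ((n:ℝ)/(2*(k:ℝ)))^k := by
        rw [div_pow, div_pow, one_pow]; ring
    _ ≤ (m:ℝ)^k := by
        refine pow_le_pow_left₀ (by positivity) hdiv k
    _ ≤ ((dpStarConfigs k w E).ncard : ℝ) := by exact_mod_cast hcount

/-- **dot product `k`-stars in the plane.** Fix `k ≥ 2` and nonzero weights
`w₁, …, w_k`.  (i) There is `C > 0` such that every set of `n` points in the plane has at
most `C · n^k` dot product `k`-star configurations; (ii) there are `c > 0` and `N` such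
that for every `n > N` some set of `n` points in the plane has at least `c · n^k`. -/
theorem dotProduct_kStar_bounds (k : ℕ) (hk : 2 ≤ k) (w : Fin k → ℝ) (hw : ∀ i, w i ≠ 0) :
    (∃ C : ℝ, 0 < C ∧ ∀ (n : ℕ) (E : Finset Pt2), E.card = n →
      ((dpStarConfigs k w E).ncard : ℝ) ≤ C * (n : ℝ) ^ k) ∧
    (∃ c : ℝ, 0 < c ∧ ∃ N : ℕ, ∀ n : ℕ, N < n →
      ∃ E : Finset Pt2, E.card = n ∧
        c * (n : ℝ) ^ k ≤ ((dpStarConfigs k w E).ncard : ℝ)) := by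
  have hkR : (0:ℝ) < (k:ℝ) := by exact_mod_cast (by omega : 0 < k)
  constructor
  · refine ⟨2, by norm_num, fun n E hE => ?_⟩
    have h := DPAux.upper k hk w hw n E hE
    calc ((dpStarConfigs k w E).ncard : ℝ) ≤ ((2 * n ^ k : ℕ) : ℝ) := by exact_mod_cast h
      _ = 2 * (n:ℝ) ^ k := by push_cast; ring
  · exact ⟨(1/(2*(k:ℝ)))^k, by positivity, 2*k,
      fun n hn => DPAux.lower k hk w hw n hn⟩
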